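/- A monomial u belongs to the principal Borel ideal Borel(m) if and only if u is divisible by some monomial that precedes m in the Borel order. Equivalently, writing m = x_{i_1}⋯x_{i_s} in weakly increasing factorization: u ∈ Borel(m) if and only if for every 1 ≤ j ≤ s, u is divisible by at least j variables (counted with multiplicity) of index at most i_j. -/

import Mathlib

/-- Borel order: `m1` precedes `m2`. -/
def BorelLe (m1 m2 : Multiset ℕ) : Prop :=
  Multiset.card m2 ≤ Multiset.card m1 ∧
    ∀ j < Multiset.card m2,
      (m1.sort (· ≤ ·)).getD j 0 ≤ (m2.sort (· ≤ ·)).getD j 0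

/-- `u` is in the principal Borel ideal `Borel(m)`: `u` is divisible by some
monomial preceding `m` in the Borel order. -/
def BorelMem (m u : Multiset ℕ) : Prop := ∃ v, BorelLe v m ∧ v ≤ u

lemma sorted_getD_le_iff {l : List ℕ} (hl : l.Pairwise (· ≤ ·)) {j : ℕ} (hj : j < l.length) (a : ℕ) :
    l.getD j 0 ≤ a ↔ j + 1 ≤ (l.filter (fun x => x ≤ a)).length := by
  have hpw := List.pairwise_iff_getElem.mp hl
  rw [List.getD_eq_getElem l 0 hj]
  constructor
  · intro h
    have hsplit : l = l.take (j+1) ++ l.drop (j+1) := (List.take_append_drop _ _).symm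
    have h1 : (l.take (j+1)).filter (fun x => x ≤ a) = l.take (j+1) := by
      apply List.filter_eq_self.mpr
      intro x hx
      obtain ⟨i, hi, rfl⟩ := List.mem_iff_getElem.mp hx
      have hi' : i < j + 1 := lt_of_lt_of_le hi (by simp [List.length_take])
      rw [List.getElem_take]
      simp only [decide_eq_true_eq]
      rcases Nat.lt_or_ge i j with h' | h'
      · exact le_trans (hpw i j (by omega) hj h') h
      · have : i = j := by omega
        subst this; exact h
    calc j + 1 = (l.take (j+1)).length := by simp [List.length_take]; omega
      _ = ((l.take (j+1)).filter (fun x => x ≤ a)).length := by rw [h1]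
      _ ≤ (l.filter (fun x => x ≤ a)).length := by
          conv_rhs => rw [hsplit]
          rw [List.filter_append, List.length_append]; omega
  · intro h
    by_contra hcon
    push_neg at hcon
    have h2 : (l.drop j).filter (fun x => x ≤ a) = [] := by
      apply List.filter_eq_nil_iff.mpr
      intro x hx
      obtain ⟨i, hi, rfl⟩ := List.mem_iff_getElem.mp hx
      rw [List.getElem_drop]
      simp only [decide_eq_true_eq, not_le]
      cases i with
      | zero => simpa using hcon
      | succ k =>
        exact lt_of_lt_of_le hcon (hpw j (j+(k+1)) hj (by simp at hi; omega) (by omega))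
    have hsplit : l = l.take j ++ l.drop j := (List.take_append_drop _ _).symm
    have : (l.filter (fun x => x ≤ a)).length ≤ j := by
      conv_lhs => rw [hsplit]
      rw [List.filter_append, List.length_append, h2]
      simp
      exact le_trans (List.length_filter_le _ _) (by simp [List.length_take])
    omega

lemma card_filter_sorted (u : Multiset ℕ) (a : ℕ) :
    Multiset.card (u.filter (fun x => x ≤ a)) = ((u.sort (· ≤ ·)).filter (fun x => x ≤ a)).length := by
  conv_lhs => rw [← Multiset.sort_eq u (· ≤ ·)]
  rw [Multiset.filter_coe]
  simp

theorem mem_principal_borel_iff (m u : Multiset ℕ)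
    (hm : ∀ x ∈ m, 1 ≤ x) (hu : ∀ x ∈ u, 1 ≤ x) :
    BorelMem m u ↔
      ∀ j < Multiset.card m,
        j + 1 ≤ Multiset.card (u.filter (fun x => x ≤ (m.sort (· ≤ ·)).getD j 0)) := by
  set s := Multiset.card m with hs
  constructor
  · rintro ⟨v, ⟨hcard, hle⟩, hvu⟩ j hj
    set a := (m.sort (· ≤ ·)).getD j 0 with ha
    have hjv : j < (v.sort (· ≤ ·)).length := by
      rw [Multiset.length_sort]; omega
    have h1 : (v.sort (· ≤ ·)).getD j 0 ≤ a := hle j hj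
    have h2 : j + 1 ≤ ((v.sort (· ≤ ·)).filter (fun x => x ≤ a)).length :=
      (sorted_getD_le_iff (Multiset.pairwise_sort _ _) hjv a).mp h1
    rw [card_filter_sorted]
    rw [← card_filter_sorted] at h2 ⊢
    exact le_trans h2 (Multiset.card_le_card (Multiset.filter_le_filter _ hvu))
  · intro h
    by_cases hs0 : s = 0
    · exact ⟨0, ⟨by omega, fun j hj => by omega⟩, Multiset.zero_le u⟩
    have hsu : s ≤ Multiset.card u := by
      have := h (s - 1) (by omega)
      have h2 := Multiset.card_le_card (Multiset.filter_le (fun x => x ≤ (m.sort (· ≤ ·)).getD (s-1) 0) u)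
      omega
    set lu := u.sort (· ≤ ·) with hlu
    have hlen : lu.length = Multiset.card u := Multiset.length_sort _
    set v : Multiset ℕ := ↑(lu.take s) with hv
    have hvsorted : (lu.take s).Pairwise (· ≤ ·) := (Multiset.pairwise_sort _ _).sublist (List.take_sublist _ _)
    have hvsort : v.sort (· ≤ ·) = lu.take s := by
      apply List.Perm.eq_of_pairwise' (Multiset.pairwise_sort _ _) hvsorted
      rw [← Multiset.coe_eq_coe, Multiset.sort_eq]
    have hvcard : Multiset.card v = s := by
      rw [hv, Multiset.coe_card, List.length_take]; omega
    refine ⟨v, ⟨by omega, fun j hj => ?_⟩, ?_⟩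
    · rw [hvsort]
      have hjl : j < (lu.take s).length := by rw [List.length_take]; omega
      have hjlu : j < lu.length := by omega
      rw [List.getD_eq_getElem _ 0 hjl, List.getElem_take, ← List.getD_eq_getElem lu 0 hjlu]
      exact (sorted_getD_le_iff (Multiset.pairwise_sort _ _) hjlu _).mpr
        (by rw [← card_filter_sorted]; exact h j hj)
    · rw [hv, ← Multiset.sort_eq u (· ≤ ·), Multiset.coe_le]
      exact (List.take_sublist _ _).subperm
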